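/- Let A be an n×n real matrix with positive diagonal entries a_{ii} > 0, and suppose that for some θ with 0 ≤ θ < π/2, every eigenvalue λ of DA (for every positive diagonal matrix D) satisfies |arg(λ)| ≤ θ. Then det A ≤ (1/cos^n θ) ∏_{i=1}^n a_{ii}. -/

import Mathlib

open Real Complex Matrix

/-- AM-GM: if the sum of `n` nonnegative reals is at most `n * c`, their product
is at most `c ^ n`. -/
lemma amgm_fin_aux (n : ℕ) (hn : 0 < n) (z : Fin n → ℝ) (hz : ∀ i, 0 ≤ z i)
    (c : ℝ) (hc : 0 ≤ c) (hsum : ∑ i, z i ≤ n * c) : ∏ i, z i ≤ c ^ n := by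
  have hn' : (n : ℝ) ≠ 0 := Nat.cast_ne_zero.mpr hn.ne'
  have hw : ∑ _i : Fin n, (1 / n : ℝ) = 1 := by
    simp [Finset.sum_const, Finset.card_univ]
    field_simp
  have key := Real.geom_mean_le_arith_mean_weighted Finset.univ (fun _ => (1 / n : ℝ)) z
    (fun i _ => by positivity) hw (fun i _ => hz i)
  have h2 : ∑ i, (1 / n : ℝ) * z i ≤ c := by
    rw [← Finset.mul_sum]
    rw [one_div]
    calc (n : ℝ)⁻¹ * ∑ i, z i ≤ (n : ℝ)⁻¹ * (n * c) := by
          apply mul_le_mul_of_nonneg_left hsum (by positivity)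
      _ = c := by field_simp
  have h3 : ∏ i, z i ^ (1 / n : ℝ) ≤ c := key.trans h2
  have h4 : (∏ i, z i ^ (1 / n : ℝ)) ^ n ≤ c ^ n :=
    pow_le_pow_left₀ (Finset.prod_nonneg fun i _ => Real.rpow_nonneg (hz i) _) h3 n
  calc ∏ i, z i = (∏ i, z i ^ (1 / n : ℝ)) ^ n := by
        rw [← Finset.prod_pow]
        refine Finset.prod_congr rfl fun i _ => ?_
        rw [← Real.rpow_natCast (z i ^ (1 / n : ℝ)) n, ← Real.rpow_mul (hz i)]
        field_simp
        rw [Real.rpow_one]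
    _ ≤ c ^ n := h4

/-- Same, indexed by a list. -/
lemma amgm_list_aux (l : List ℝ) (hl : ∀ x ∈ l, 0 ≤ x) (c : ℝ) (hc : 0 ≤ c)
    (hsum : l.sum ≤ l.length * c) : l.prod ≤ c ^ l.length := by
  rcases Nat.eq_zero_or_pos l.length with h0 | hpos
  · rw [List.length_eq_zero_iff] at h0
    simp [h0]
  · have hl' : ∀ i : Fin l.length, 0 ≤ l.get i := fun i => hl _ (l.get_mem _)
    have hofn : List.ofFn l.get = l := List.ofFn_get l
    have hsum' : ∑ i, l.get i ≤ l.length * c := by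
      rw [← List.sum_ofFn, hofn]; exact hsum
    have := amgm_fin_aux l.length hpos l.get hl' c hc hsum'
    rwa [← List.prod_ofFn, hofn] at this
  
/-- A root of the characteristic polynomial is in the spectrum. -/
lemma root_mem_spectrum_aux {n : ℕ} (M : Matrix (Fin n) (Fin n) ℂ) (μ : ℂ)
    (h : M.charpoly.IsRoot μ) : μ ∈ spectrum ℂ M := by
  rw [spectrum.mem_iff]
  intro hu
  have heval : Polynomial.eval μ M.charpoly = (Matrix.scalar (Fin n) μ - M).det := by
    rw [Matrix.charpoly, eval_det, Matrix.matPolyEquiv_charmatrix]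
    simp
  rw [Polynomial.IsRoot, heval] at h
  have halg : algebraMap ℂ (Matrix (Fin n) (Fin n) ℂ) μ = Matrix.scalar (Fin n) μ := rfl
  rw [halg] at hu
  have := (Matrix.isUnit_iff_isUnit_det _).mp hu
  rw [h] at this
  exact not_isUnit_zero this
  
theorem det_bound_relatively_D_stable (n : ℕ) (A : Matrix (Fin n) (Fin n) ℝ)
    (hdiag : ∀ i, 0 < A i i) (θ : ℝ) (hθ₀ : 0 ≤ θ) (hθ : θ < π / 2)
    (hstab : ∀ d : Fin n → ℝ, (∀ i, 0 < d i) →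
      ∀ μ ∈ spectrum ℂ ((Matrix.diagonal d * A).map (Complex.ofReal)),
        |μ.arg| ≤ θ) :
    A.det ≤ (1 / Real.cos θ ^ n) * ∏ i, A i i := by
  have hc : 0 < Real.cos θ :=
    Real.cos_pos_of_mem_Ioo ⟨lt_of_lt_of_le (by linarith [Real.pi_pos]) hθ₀, hθ⟩
  rcases Nat.eq_zero_or_pos n with hn0 | hn
  · subst hn0
    simp [Matrix.det_isEmpty]
  -- setup
  set d : Fin n → ℝ := fun i => (A i i)⁻¹ with hd_def
  have hd : ∀ i, 0 < d i := fun i => inv_pos.mpr (hdiag i)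
  set B : Matrix (Fin n) (Fin n) ℝ := Matrix.diagonal d * A with hB_def
  set M : Matrix (Fin n) (Fin n) ℂ := B.map Complex.ofReal with hM_def
  -- trace of M is n
  have hBdiag : ∀ i, B i i = 1 := by
    intro i
    rw [hB_def, Matrix.diagonal_mul]
    exact inv_mul_cancel₀ (hdiag i).ne'
  have htrace : M.trace = (n : ℂ) := by
    rw [Matrix.trace]
    have h1 : ∀ i : Fin n, M.diag i = 1 := by
      intro i
      simp [Matrix.diag_apply, hM_def, Matrix.map_apply, hBdiag i]
    rw [Finset.sum_congr rfl fun i _ => h1 i]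
    simp
  -- determinant of M
  have hdetM : M.det = ((B.det : ℝ) : ℂ) := by
    rw [hM_def]
    exact (RingHom.map_det Complex.ofRealHom B).symm
  -- roots of charpoly
  set l : List ℂ := M.charpoly.roots.toList with hl_def
  have hroots_coe : (l : Multiset ℂ) = M.charpoly.roots := Multiset.coe_toList _
  have hcard : l.length = n := by
    have hsp := Polynomial.splits_iff_card_roots.mp (IsAlgClosed.splits M.charpoly)
    have : M.charpoly.roots.card = n := by
      rw [hsp, Matrix.charpoly_natDegree_eq_dim, Fintype.card_fin]
    rw [← this, ← hroots_coe, Multiset.coe_card]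
  have hsum_l : l.sum = (n : ℂ) := by
    have := Matrix.trace_eq_sum_roots_charpoly M
    rw [← hroots_coe, Multiset.sum_coe] at this
    rw [← this, htrace]
  have hprod_l : l.prod = M.det := by
    have := Matrix.det_eq_prod_roots_charpoly M
    rw [← hroots_coe, Multiset.prod_coe] at this
    rw [this]
  -- each root is in the spectrum, hence in the sector
  have hsector : ∀ μ ∈ l, ‖μ‖ * Real.cos θ ≤ μ.re := by
    intro μ hμ
    have hroot : M.charpoly.IsRoot μ := by
      have : μ ∈ M.charpoly.roots := by rw [← hroots_coe]; exact_mod_cast hμ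
      exact Polynomial.isRoot_of_mem_roots this
    have hspec : μ ∈ spectrum ℂ M := root_mem_spectrum_aux M μ hroot
    have harg : |μ.arg| ≤ θ := hstab d hd μ (by rwa [← hB_def, ← hM_def])
    rcases eq_or_ne μ 0 with rfl | hμ0
    · simp
    · have hcosarg : Real.cos (μ.arg) = μ.re / ‖μ‖ := Complex.cos_arg hμ0
      have habs : 0 < ‖μ‖ := norm_pos_iff.mpr hμ0
      have hcos_le : Real.cos θ ≤ Real.cos (μ.arg) := by
        rw [← Real.cos_abs (μ.arg)]
        exact Real.cos_le_cos_of_nonneg_of_le_pi (abs_nonneg _)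
          (by linarith [Real.pi_pos]) harg
      calc ‖μ‖ * Real.cos θ ≤ ‖μ‖ * Real.cos μ.arg :=
            mul_le_mul_of_nonneg_left hcos_le habs.le
        _ = μ.re := by rw [hcosarg]; field_simp
  -- sum of abs values
  have hsum_abs : (l.map (‖·‖)).sum * Real.cos θ ≤ (n : ℝ) := by
    have h1 : (l.map (fun μ => ‖μ‖ * Real.cos θ)).sum ≤ (l.map Complex.re).sum := by
      apply List.sum_le_sum
      intro μ hμ
      exact hsector μ hμ
    have h2 : (l.map Complex.re).sum = (n : ℝ) := by
      have := map_list_sum Complex.reAddGroupHom l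
      simp only [Complex.coe_reAddGroupHom] at this
      rw [← this, hsum_l]
      simp
    have h3 : (l.map (fun μ => ‖μ‖ * Real.cos θ)).sum
        = (l.map (‖·‖)).sum * Real.cos θ := List.sum_map_mul_right l (‖·‖) _
    rw [← h3]
    exact h1.trans_eq h2
  have hS : (l.map (‖·‖)).sum ≤ (n : ℝ) * (1 / Real.cos θ) := by
    rw [mul_one_div, le_div_iff₀ hc]
    exact hsum_abs
  -- product of abs values
  have hP : (l.map (‖·‖)).prod ≤ (1 / Real.cos θ) ^ n := by
    have := amgm_list_aux (l.map (‖·‖))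
      (by intro x hx; simp only [List.mem_map] at hx; obtain ⟨μ, _, rfl⟩ := hx
          exact norm_nonneg μ)
      (1 / Real.cos θ) (by positivity)
      (by rw [List.length_map, hcard]; exact hS)
    rwa [List.length_map, hcard] at this
  -- connect to det B
  have habs_detB : |B.det| ≤ (1 / Real.cos θ) ^ n := by
    have h1 : ‖M.det‖ = (l.map (‖·‖)).prod := by
      rw [← hprod_l, List.norm_prod]
    have h2 : ‖M.det‖ = |B.det| := by
      rw [hdetM, Complex.norm_real, Real.norm_eq_abs]
    rw [← h2, h1]
    exact hP
  -- det B in terms of det A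
  have hdetB : B.det = (∏ i, d i) * A.det := by
    rw [hB_def, Matrix.det_mul, Matrix.det_diagonal]
  have hprod_pos : 0 < ∏ i, A i i := Finset.prod_pos fun i _ => hdiag i
  have hprod_d : ∏ i, d i = (∏ i, A i i)⁻¹ := by
    rw [← Finset.prod_inv_distrib]
  have hkey : A.det = (∏ i, A i i) * B.det := by
    rw [hdetB, hprod_d, ← mul_assoc, mul_inv_cancel₀ hprod_pos.ne', one_mul]
  calc A.det = (∏ i, A i i) * B.det := hkey
    _ ≤ (∏ i, A i i) * |B.det| := by
        apply mul_le_mul_of_nonneg_left (le_abs_self _) hprod_pos.le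
    _ ≤ (∏ i, A i i) * (1 / Real.cos θ) ^ n :=
        mul_le_mul_of_nonneg_left habs_detB hprod_pos.le
    _ = (1 / Real.cos θ ^ n) * ∏ i, A i i := by rw [mul_comm, one_div, one_div, inv_pow]
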